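/- Let u₀, v₀: ℝ² → ℝ be the unique functions such that (u₀(x,y), v₀(x,y)) satisfies v² + y² = (x²+u²)², vu + yx = 0, vx − yu ≥ 0, with u₀ opposite in sign to y and v₀ the same sign as x. Then for all t > 0 and (x,y) ∈ ℝ²: u₀(tx, t²y) = t·u₀(x,y) and v₀(tx, t²y) = t²·v₀(x,y). -/
import Mathlib

lemma eq_of_sq_eq_of_mul_nonneg (a b : ℝ) (hsq : a ^ 2 = b ^ 2) (hab : 0 ≤ a * b) : a = b := by
  rcases abs_eq_abs.mp ((sq_eq_sq_iff_abs_eq_abs a b).mp hsq) with h | h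
  · exact h
  · have hb : b = 0 := by nlinarith
    rw [h, hb, neg_zero]

lemma mul_sign_transfer (y u u' : ℝ) (h3 : y * u ≤ 0) (h3' : y * u' ≤ 0) (hy : y ≠ 0) :
    0 ≤ u * u' := by
  rcases lt_or_gt_of_ne hy with h | h
  · have hu : 0 ≤ u := by nlinarith
    have hu' : 0 ≤ u' := by nlinarith
    exact mul_nonneg hu hu'
  · have hu : u ≤ 0 := by nlinarith
    have hu' : u' ≤ 0 := by nlinarith
    have := mul_nonneg (neg_nonneg.mpr hu) (neg_nonneg.mpr hu')
    nlinarith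

/-- In the degenerate case x = y = 0 the system forces u = v = 0. -/
lemma hl_degenerate (u v : ℝ)
    (h1 : v ^ 2 + (0:ℝ) ^ 2 = ((0:ℝ) ^ 2 + u ^ 2) ^ 2)
    (h2 : v * u + (0:ℝ) * (0:ℝ) = 0) : u = 0 ∧ v = 0 := by
  have h6 : u ^ 6 = 0 := by nlinarith [sq_nonneg u, sq_nonneg v]
  have hu : u = 0 := by
    have := pow_eq_zero_iff (n := 6) (by norm_num) |>.mp h6
    exact this
  subst hu
  have hv : v ^ 2 = 0 := by nlinarith
  exact ⟨rfl, pow_eq_zero_iff (n := 2) (by norm_num) |>.mp hv⟩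

set_option maxHeartbeats 1000000 in
/-- Uniqueness of solutions to the Harvey–Lawson algebraic system with sign conventions. -/
lemma hl_uniq (x y u v u' v' : ℝ)
    (h1 : v ^ 2 + y ^ 2 = (x ^ 2 + u ^ 2) ^ 2)
    (h2 : v * u + y * x = 0)
    (h3 : y * u ≤ 0) (h4 : x * v ≥ 0)
    (h1' : v' ^ 2 + y ^ 2 = (x ^ 2 + u' ^ 2) ^ 2)
    (h2' : v' * u' + y * x = 0)
    (h3' : y * u' ≤ 0) (h4' : x * v' ≥ 0) :
    u = u' ∧ v = v' := by
  by_cases hr0 : x ^ 2 + u ^ 2 = 0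
  · -- degenerate: x = u = 0, hence v = y = 0
    have hx : x = 0 := by
      have hx2 : x ^ 2 = 0 := by nlinarith [sq_nonneg x, sq_nonneg u]
      exact pow_eq_zero_iff (n := 2) (by norm_num) |>.mp hx2
    have hu : u = 0 := by
      have hu2 : u ^ 2 = 0 := by nlinarith [sq_nonneg x, sq_nonneg u]
      exact pow_eq_zero_iff (n := 2) (by norm_num) |>.mp hu2
    have hv : v = 0 := by
      have hv2 : v ^ 2 = 0 := by
        subst hx hu; nlinarith [sq_nonneg v, sq_nonneg y]
      exact pow_eq_zero_iff (n := 2) (by norm_num) |>.mp hv2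
    have hy : y = 0 := by
      have hy2 : y ^ 2 = 0 := by
        subst hx hu; nlinarith [sq_nonneg v, sq_nonneg y]
      exact pow_eq_zero_iff (n := 2) (by norm_num) |>.mp hy2
    subst hx hy
    obtain ⟨hu', hv'⟩ := hl_degenerate u' v' h1' h2'
    exact ⟨hu.trans hu'.symm, hv.trans hv'.symm⟩
  by_cases hr0' : x ^ 2 + u' ^ 2 = 0
  · have hx : x = 0 := by
      have hx2 : x ^ 2 = 0 := by nlinarith [sq_nonneg x, sq_nonneg u']
      exact pow_eq_zero_iff (n := 2) (by norm_num) |>.mp hx2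
    have hu' : u' = 0 := by
      have h' : u' ^ 2 = 0 := by nlinarith [sq_nonneg x, sq_nonneg u']
      exact pow_eq_zero_iff (n := 2) (by norm_num) |>.mp h'
    have hy : y = 0 := by
      have hy2 : y ^ 2 = 0 := by
        subst hx hu'; nlinarith [sq_nonneg v', sq_nonneg y]
      exact pow_eq_zero_iff (n := 2) (by norm_num) |>.mp hy2
    have hv' : v' = 0 := by
      have h' : v' ^ 2 = 0 := by
        subst hx hu'; nlinarith [sq_nonneg v', sq_nonneg y]
      exact pow_eq_zero_iff (n := 2) (by norm_num) |>.mp h'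
    subst hx hy
    obtain ⟨hu, hv⟩ := hl_degenerate u v h1 h2
    exact ⟨hu.trans hu'.symm, hv.trans hv'.symm⟩
  -- main case: r = x² + u² > 0 and r' = x² + u'² > 0
  have hr : 0 < x ^ 2 + u ^ 2 :=
    lt_of_le_of_ne (by positivity) (Ne.symm hr0)
  have hr' : 0 < x ^ 2 + u' ^ 2 :=
    lt_of_le_of_ne (by positivity) (Ne.symm hr0')
  -- squared product identities
  have huv : v ^ 2 * u ^ 2 = y ^ 2 * x ^ 2 := by
    linear_combination (v * u - y * x) * h2
  have huv' : v' ^ 2 * u' ^ 2 = y ^ 2 * x ^ 2 := by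
    linear_combination (v' * u' - y * x) * h2'
  -- v² = x² r
  have hv2 : v ^ 2 = x ^ 2 * (x ^ 2 + u ^ 2) := by
    have h5 : v ^ 2 * (x ^ 2 + u ^ 2) = (x ^ 2 * (x ^ 2 + u ^ 2)) * (x ^ 2 + u ^ 2) := by
      linear_combination huv + x ^ 2 * h1
    exact mul_right_cancel₀ (ne_of_gt hr) h5
  have hv2' : v' ^ 2 = x ^ 2 * (x ^ 2 + u' ^ 2) := by
    have h5 : v' ^ 2 * (x ^ 2 + u' ^ 2) = (x ^ 2 * (x ^ 2 + u' ^ 2)) * (x ^ 2 + u' ^ 2) := by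
      linear_combination huv' + x ^ 2 * h1'
    exact mul_right_cancel₀ (ne_of_gt hr') h5
  -- u² r = y²
  have hu2 : u ^ 2 * (x ^ 2 + u ^ 2) = y ^ 2 := by
    have h5 : (u ^ 2 * (x ^ 2 + u ^ 2)) * (x ^ 2 + u ^ 2) = y ^ 2 * (x ^ 2 + u ^ 2) := by
      linear_combination huv - u ^ 2 * h1
    exact mul_right_cancel₀ (ne_of_gt hr) h5
  have hu2' : u' ^ 2 * (x ^ 2 + u' ^ 2) = y ^ 2 := by
    have h5 : (u' ^ 2 * (x ^ 2 + u' ^ 2)) * (x ^ 2 + u' ^ 2) = y ^ 2 * (x ^ 2 + u' ^ 2) := by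
      linear_combination huv' - u' ^ 2 * h1'
    exact mul_right_cancel₀ (ne_of_gt hr') h5
  -- quadratic satisfied by r
  have hreq : (x ^ 2 + u ^ 2) ^ 2 = x ^ 2 * (x ^ 2 + u ^ 2) + y ^ 2 := by
    rw [← h1]; linarith [hv2]
  have hreq' : (x ^ 2 + u' ^ 2) ^ 2 = x ^ 2 * (x ^ 2 + u' ^ 2) + y ^ 2 := by
    rw [← h1']; linarith [hv2']
  -- r = r'
  have hrr : (x ^ 2 + u ^ 2 - (x ^ 2 + u' ^ 2)) *
      ((x ^ 2 + u ^ 2) + (x ^ 2 + u' ^ 2) - x ^ 2) = 0 := by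
    linear_combination hreq - hreq'
  have hre : x ^ 2 + u ^ 2 = x ^ 2 + u' ^ 2 := by
    rcases mul_eq_zero.mp hrr with h | h
    · linarith
    · exfalso; nlinarith [sq_nonneg u, hr']
  -- equal squares
  have hvsq : v ^ 2 = v' ^ 2 := by rw [hv2, hv2', hre]
  have husq : u ^ 2 = u' ^ 2 := by
    have := hu2'
    rw [← hre] at this
    exact mul_right_cancel₀ (ne_of_gt hr) (hu2.trans this.symm)
  constructor
  · -- u = u'
    by_cases hy : y = 0
    · have hu : u ^ 2 = 0 := by
        have := hu2; rw [hy] at this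
        have h0 : u ^ 2 * (x ^ 2 + u ^ 2) = 0 := by linarith [this]; 
        rcases mul_eq_zero.mp h0 with h | h
        · exact h
        · exact absurd h (ne_of_gt hr)
      have hu' : u' ^ 2 = 0 := by rw [← husq]; exact hu
      rw [pow_eq_zero_iff (n := 2) (by norm_num) |>.mp hu,
          pow_eq_zero_iff (n := 2) (by norm_num) |>.mp hu']
    · have huu' : 0 ≤ u * u' := mul_sign_transfer y u u' h3 h3' hy
      have hab : u * u' = u ^ 2 := by
        refine eq_of_sq_eq_of_mul_nonneg _ _ ?_ (mul_nonneg huu' (sq_nonneg u))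
        linear_combination (-(u ^ 2)) * husq
      have hz : (u - u') ^ 2 = 0 := by linear_combination -husq - 2 * hab
      have := pow_eq_zero_iff (n := 2) (by norm_num) |>.mp hz
      linarith
  · -- v = v'
    by_cases hx : x = 0
    · have hv : v ^ 2 = 0 := by rw [hv2, hx]; ring
      have hv' : v' ^ 2 = 0 := by rw [hv2', hx]; ring
      rw [pow_eq_zero_iff (n := 2) (by norm_num) |>.mp hv,
          pow_eq_zero_iff (n := 2) (by norm_num) |>.mp hv']
    · have hvv' : 0 ≤ v * v' := by
        refine mul_sign_transfer (-x) v v' (by linarith) (by linarith) (neg_ne_zero.mpr hx)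
      have hab : v * v' = v ^ 2 := by
        refine eq_of_sq_eq_of_mul_nonneg _ _ ?_ (mul_nonneg hvv' (sq_nonneg v))
        linear_combination (-(v ^ 2)) * hvsq
      have hz : (v - v') ^ 2 = 0 := by linear_combination -hvsq - 2 * hab
      have := pow_eq_zero_iff (n := 2) (by norm_num) |>.mp hz
      linarith

theorem harvey_lawson_homogeneity (u₀ v₀ : ℝ → ℝ → ℝ)
    (hsys : ∀ x y : ℝ,
      (v₀ x y) ^ 2 + y ^ 2 = (x ^ 2 + (u₀ x y) ^ 2) ^ 2 ∧
      v₀ x y * u₀ x y + y * x = 0 ∧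
      v₀ x y * x - y * u₀ x y ≥ 0)
    (hsign : ∀ x y : ℝ, y * u₀ x y ≤ 0 ∧ x * v₀ x y ≥ 0) :
    ∀ t : ℝ, 0 < t → ∀ x y : ℝ,
      u₀ (t * x) (t ^ 2 * y) = t * u₀ x y ∧
      v₀ (t * x) (t ^ 2 * y) = t ^ 2 * v₀ x y := by
  intro t ht x y
  obtain ⟨e1, e2, e3⟩ := hsys x y
  obtain ⟨s1, s2⟩ := hsign x y
  obtain ⟨E1, E2, E3⟩ := hsys (t * x) (t ^ 2 * y)
  obtain ⟨S1, S2⟩ := hsign (t * x) (t ^ 2 * y)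
  have ht3 : 0 < t ^ 3 := by positivity
  -- the scaled pair (t·u, t²·v) satisfies the system at (t·x, t²·y)
  have H1 : (t ^ 2 * v₀ x y) ^ 2 + (t ^ 2 * y) ^ 2 =
      ((t * x) ^ 2 + (t * u₀ x y) ^ 2) ^ 2 := by
    linear_combination t ^ 4 * e1
  have H2 : (t ^ 2 * v₀ x y) * (t * u₀ x y) + (t ^ 2 * y) * (t * x) = 0 := by
    linear_combination t ^ 3 * e2
  have H3 : (t ^ 2 * y) * (t * u₀ x y) ≤ 0 := by nlinarith [mul_nonpos_of_nonneg_of_nonpos ht3.le s1]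
  have H4 : (t * x) * (t ^ 2 * v₀ x y) ≥ 0 := by nlinarith [mul_nonneg ht3.le s2]
  have := hl_uniq (t * x) (t ^ 2 * y)
    (u₀ (t * x) (t ^ 2 * y)) (v₀ (t * x) (t ^ 2 * y))
    (t * u₀ x y) (t ^ 2 * v₀ x y)
    E1 E2 S1 S2 H1 H2 H3 H4
  exact this
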